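/- Hardy-type inequality used in the weighted Poincaré lemma: If u : [0,1) → ℝ is locally absolutely continuous with u(0) = 0, then ∫₀¹ u(t)² dt ≤ 4 ∫₀¹ (1−t)² u'(t)² dt (both sides possibly infinite, the right-hand side interpreted as the integral of (1−t)² u'(t)² over [0,1)). -/

import Mathlib

noncomputable section

open Set MeasureTheory intervalIntegral

lemma integral_one_sub_rpow (a b r : ℝ) (h : -1 < r ∨ r ≠ -1 ∧ (0:ℝ) ∉ Set.uIcc (1-b) (1-a)) :
    ∫ t in a..b, (1 - t) ^ r = ((1-a)^(r+1) - (1-b)^(r+1)) / (r+1) := by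
  have := intervalIntegral.integral_comp_sub_left (a := a) (b := b) (fun s => s ^ r) 1
  rw [this, integral_rpow h]

lemma intble_neg (x : ℝ) (hx : x < 1) (hx0 : 0 ≤ x) :
    IntervalIntegrable (fun t => (1 - t) ^ (-(3/2) : ℝ)) volume 0 x := by
  apply ContinuousOn.intervalIntegrable
  apply ContinuousOn.rpow_const
  · exact (continuous_const.sub continuous_id).continuousOn
  · intro t ht
    left
    rw [uIcc_of_le hx0] at ht
    have : t ≤ x := ht.2
    nlinarith [ht.1]

lemma intble_half (t0 : ℝ) :
    IntervalIntegrable (fun x => (1 - x) ^ (-(1/2) : ℝ)) volume t0 1 := by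
  have h := (intervalIntegrable_rpow' (a := 1 - 1) (b := 1 - t0) (r := (-(1/2):ℝ)) (by norm_num))
  have := (h.comp_sub_left 1).symm
  simpa using this

lemma integral_neg32 (x : ℝ) (hx0 : 0 ≤ x) (hx : x < 1) :
    ∫ t in (0:ℝ)..x, (1 - t) ^ (-(3/2) : ℝ) = 2 * (1-x) ^ (-(1/2):ℝ) - 2 := by
  rw [integral_one_sub_rpow 0 x (-(3/2)) (Or.inr ⟨by norm_num, ?_⟩)]
  · norm_num
    ring
  · rw [Set.uIcc_of_le (by linarith)]
    intro h
    exact absurd h.1 (by norm_num [sub_pos, hx])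

lemma integral_neg12 (t0 : ℝ) (h0 : 0 ≤ t0) (h1 : t0 ≤ 1) :
    ∫ x in t0..(1:ℝ), (1 - x) ^ (-(1/2) : ℝ) = 2 * (1-t0) ^ ((1/2):ℝ) := by
  rw [integral_one_sub_rpow t0 1 (-(1/2)) (Or.inl (by norm_num))]
  have : ((1:ℝ)-1) ^ ((-(1/2):ℝ)+1) = 0 := by
    norm_num
  rw [this]
  norm_num
  ring

lemma lint_neg32 (x : ℝ) (hx0 : 0 ≤ x) (hx : x < 1) :
    ∫⁻ t in Ioc (0:ℝ) x, ENNReal.ofReal ((1 - t) ^ (-(3/2) : ℝ))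
      ≤ ENNReal.ofReal (2 * (1-x) ^ (-(1/2):ℝ)) := by
  have hint : IntegrableOn (fun t => (1 - t) ^ (-(3/2) : ℝ)) (Ioc 0 x) volume :=
    (intble_neg x hx hx0).1
  rw [← ofReal_integral_eq_lintegral_ofReal hint ?pos]
  case pos =>
    filter_upwards [ae_restrict_mem measurableSet_Ioc] with t ht
    exact Real.rpow_nonneg (by linarith [ht.2]) _
  apply ENNReal.ofReal_le_ofReal
  have : ∫ t in Ioc (0:ℝ) x, (1 - t) ^ (-(3/2) : ℝ) = ∫ t in (0:ℝ)..x, (1 - t) ^ (-(3/2) : ℝ) := by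
    rw [intervalIntegral.integral_of_le hx0]
  rw [this, integral_neg32 x hx0 hx]
  have : (0:ℝ) ≤ 2 * (1-x) ^ (-(1/2):ℝ) :=
    mul_nonneg (by norm_num) (Real.rpow_nonneg (by linarith) _)
  linarith

lemma lint_neg12 (t0 : ℝ) (h0 : 0 ≤ t0) (h1 : t0 < 1) :
    ∫⁻ x in Ico t0 (1:ℝ), ENNReal.ofReal ((1 - x) ^ (-(1/2) : ℝ))
      = ENNReal.ofReal (2 * (1-t0) ^ ((1/2):ℝ)) := by
  rw [Measure.restrict_congr_set Ico_ae_eq_Ioc]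
  have hint : IntegrableOn (fun x => (1 - x) ^ (-(1/2) : ℝ)) (Ioc t0 1) volume :=
    (intble_half t0).1
  rw [← ofReal_integral_eq_lintegral_ofReal hint ?pos]
  case pos =>
    filter_upwards [ae_restrict_mem measurableSet_Ioc] with t ht
    exact Real.rpow_nonneg (by linarith [ht.2]) _
  congr 1
  rw [← intervalIntegral.integral_of_le h1.le, integral_neg12 t0 h0 h1.le]

lemma pointwise_bound (u v w : ℝ → ℝ) (hw : Measurable w) (x : ℝ) (hx0 : 0 ≤ x) (hx : x < 1)
    (hvi : IntervalIntegrable v volume 0 x) (hux : u x = ∫ t in (0:ℝ)..x, v t)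
    (hvw : v =ᵐ[volume.restrict (Ioc 0 x)] w) :
    ENNReal.ofReal (u x ^ 2)
      ≤ ENNReal.ofReal (2 * (1-x) ^ (-(1/2):ℝ))
        * ∫⁻ t in Ioc (0:ℝ) x, ENNReal.ofReal ((1-t) ^ ((3:ℝ)/2) * w t ^ 2) := by
  set f : ℝ → ENNReal := fun t => ENNReal.ofReal ((1-t) ^ (-(3/4) : ℝ)) with hf
  set g : ℝ → ENNReal := fun t => ENNReal.ofReal ((1-t) ^ ((3:ℝ)/4) * |w t|) with hg
  set μ := volume.restrict (Ioc (0:ℝ) x) with hμ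
  -- step: ofReal |u x| ≤ ∫⁻ f*g
  have habs : ENNReal.ofReal |u x| ≤ ∫⁻ t, (f * g) t ∂μ := by
    have h1 : |u x| ≤ ∫ t in (0:ℝ)..x, |v t| := by
      rw [hux]; exact intervalIntegral.abs_integral_le_integral_abs hx0
    have h2 : ENNReal.ofReal (∫ t in (0:ℝ)..x, |v t|) = ∫⁻ t, ENNReal.ofReal |v t| ∂μ := by
      rw [intervalIntegral.integral_of_le hx0]
      exact ofReal_integral_eq_lintegral_ofReal hvi.abs.1
        (Filter.Eventually.of_forall fun t => abs_nonneg _)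
    have h3 : ∫⁻ t, ENNReal.ofReal |v t| ∂μ = ∫⁻ t, (f * g) t ∂μ := by
      apply lintegral_congr_ae
      filter_upwards [hvw, ae_restrict_mem measurableSet_Ioc] with t htv ht
      have h1t : (0:ℝ) < 1 - t := by linarith [ht.2]
      simp only [Pi.mul_apply, hf, hg, htv]
      rw [← ENNReal.ofReal_mul (Real.rpow_nonneg h1t.le _), ← mul_assoc,
        ← Real.rpow_add h1t]
      norm_num
    calc ENNReal.ofReal |u x| ≤ ENNReal.ofReal (∫ t in (0:ℝ)..x, |v t|) :=
          ENNReal.ofReal_le_ofReal h1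
      _ = _ := h2.trans h3
  -- Hölder
  have hconj : Real.HolderConjugate 2 2 := Real.HolderConjugate.two_two
  have hfm : AEMeasurable f μ :=
    (ENNReal.measurable_ofReal.comp ((measurable_const.sub measurable_id).pow measurable_const)).aemeasurable
  have hgm : AEMeasurable g μ := by
    apply Measurable.aemeasurable
    apply ENNReal.measurable_ofReal.comp
    exact ((measurable_const.sub measurable_id).pow measurable_const).mul hw.abs
  have holder := ENNReal.lintegral_mul_le_Lp_mul_Lq μ hconj hfm hgm
  -- identify f^2 and g^2
  have hf2 : ∫⁻ t, f t ^ (2:ℝ) ∂μ ≤ ENNReal.ofReal (2 * (1-x) ^ (-(1/2):ℝ)) := by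
    refine le_trans (le_of_eq (lintegral_congr_ae ?_)) (lint_neg32 x hx0 hx)
    filter_upwards [ae_restrict_mem measurableSet_Ioc] with t ht
    have h1t : (0:ℝ) < 1 - t := by linarith [ht.2]
    simp only [hf]
    rw [ENNReal.ofReal_rpow_of_nonneg (Real.rpow_nonneg h1t.le _) (by norm_num : (0:ℝ) ≤ 2),
      ← Real.rpow_mul h1t.le]
    norm_num
  have hg2 : ∫⁻ t, g t ^ (2:ℝ) ∂μ
      = ∫⁻ t in Ioc (0:ℝ) x, ENNReal.ofReal ((1-t) ^ ((3:ℝ)/2) * w t ^ 2) := by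
    apply lintegral_congr_ae
    filter_upwards [ae_restrict_mem measurableSet_Ioc] with t ht
    have h1t : (0:ℝ) < 1 - t := by linarith [ht.2]
    simp only [hg]
    rw [ENNReal.ofReal_rpow_of_nonneg (mul_nonneg (Real.rpow_nonneg h1t.le _) (abs_nonneg _))
        (by norm_num : (0:ℝ) ≤ 2),
      Real.mul_rpow (Real.rpow_nonneg h1t.le _) (abs_nonneg _), ← Real.rpow_mul h1t.le]
    norm_num
  -- combine
  set B := ∫⁻ t in Ioc (0:ℝ) x, ENNReal.ofReal ((1-t) ^ ((3:ℝ)/2) * w t ^ 2) with hB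
  set A := ENNReal.ofReal (2 * (1-x) ^ (-(1/2):ℝ)) with hA
  have key : ENNReal.ofReal |u x| ≤ A ^ ((1:ℝ)/2) * B ^ ((1:ℝ)/2) := by
    refine habs.trans (holder.trans ?_)
    rw [hg2]
    exact mul_le_mul' (ENNReal.rpow_le_rpow hf2 (by norm_num)) le_rfl
  have : ENNReal.ofReal (u x ^ 2) = (ENNReal.ofReal |u x|) ^ (2:ℕ) := by
    rw [← ENNReal.ofReal_pow (abs_nonneg _), sq_abs]
  rw [this]
  calc (ENNReal.ofReal |u x|) ^ (2:ℕ) ≤ (A ^ ((1:ℝ)/2) * B ^ ((1:ℝ)/2)) ^ (2:ℕ) :=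
        pow_le_pow_left₀ (zero_le (a := ENNReal.ofReal |u x|)) key 2
    _ = A * B := by
        rw [mul_pow, ← ENNReal.rpow_natCast (A ^ ((1:ℝ)/2)) 2, ← ENNReal.rpow_natCast (B ^ ((1:ℝ)/2)) 2,
          ← ENNReal.rpow_mul, ← ENNReal.rpow_mul]
        norm_num

-- ∫⁻ x in Ico t0 1, ofReal (2 * (1-x)^(-1/2)) = ofReal (4 * (1-t0)^(1/2))
lemma lint_F (t0 : ℝ) (h0 : 0 ≤ t0) (h1 : t0 < 1) :
    ∫⁻ x in Ico t0 (1:ℝ), ENNReal.ofReal (2 * (1 - x) ^ (-(1/2) : ℝ))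
      = ENNReal.ofReal (4 * (1-t0) ^ ((1/2):ℝ)) := by
  rw [Measure.restrict_congr_set Ico_ae_eq_Ioc]
  have hint : IntegrableOn (fun x => 2 * (1 - x) ^ (-(1/2) : ℝ)) (Ioc t0 1) volume :=
    ((intble_half t0).const_mul 2).1
  rw [← ofReal_integral_eq_lintegral_ofReal hint ?pos]
  case pos =>
    filter_upwards [ae_restrict_mem measurableSet_Ioc] with t ht
    exact mul_nonneg (by norm_num) (Real.rpow_nonneg (by linarith [ht.2]) _)
  congr 1
  rw [← intervalIntegral.integral_of_le h1.le]
  rw [intervalIntegral.integral_const_mul, integral_neg12 t0 h0 h1.le]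
  ring

/-- **Hardy-type inequality.** If `u : [0,1) → ℝ` is locally absolutely continuous with
`u 0 = 0` (encoded via the fundamental theorem of calculus: `v` is locally integrable on
`[0,1)` and `u x = ∫₀ˣ v`), then `∫₀¹ u² ≤ 4 ∫₀¹ (1−t)² u'²`, both sides possibly infinite
(stated with lower Lebesgue integrals). -/
theorem hardy_inequality (u v : ℝ → ℝ)
    (hu0 : u 0 = 0)
    (hftc : ∀ x ∈ Ico (0:ℝ) 1,
      IntervalIntegrable v volume 0 x ∧ u x = ∫ t in (0:ℝ)..x, v t) :
    (∫⁻ t in Ico (0:ℝ) 1, ENNReal.ofReal ((u t) ^ 2))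
      ≤ 4 * ∫⁻ t in Ico (0:ℝ) 1, ENNReal.ofReal ((1 - t) ^ 2 * (v t) ^ 2) := by
  -- Step 0: a measurable representative of `v` on `[0,1)`
  have hsub : ∀ n : ℕ, (1 - 1/(n+1) : ℝ) ∈ Ico (0:ℝ) 1 := by
    intro n
    constructor
    · have h1 : (1:ℝ)/(n+1) ≤ 1 := by
        rw [div_le_one (by positivity)]; linarith [Nat.cast_nonneg (α := ℝ) n]
      linarith
    · have : (0:ℝ) < 1/(n+1) := by positivity
      linarith
  have hunion : Ico (0:ℝ) 1 = ⋃ n : ℕ, Icc (0:ℝ) (1 - 1/(n+1)) := by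
    ext t
    simp only [mem_Ico, mem_iUnion, mem_Icc]
    constructor
    · rintro ⟨ht0, ht1⟩
      obtain ⟨n, hn⟩ := exists_nat_one_div_lt (show (0:ℝ) < 1 - t by linarith)
      exact ⟨n, ht0, by push_cast at hn ⊢; linarith⟩
    · rintro ⟨n, h0, h1⟩
      exact ⟨h0, lt_of_le_of_lt h1 (hsub n).2⟩
  have hvae : AEMeasurable v (volume.restrict (Ico (0:ℝ) 1)) := by
    rw [hunion]
    rw [aemeasurable_iUnion_iff]
    intro n
    have h1 := (hftc _ (hsub n)).1
    have : AEMeasurable v (volume.restrict (Ioc (0:ℝ) (1 - 1/(n+1)))) :=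
      h1.1.aestronglyMeasurable.aemeasurable
    rwa [Measure.restrict_congr_set Ioc_ae_eq_Icc] at this
  set w := hvae.mk v with hwdef
  have hwm : Measurable w := hvae.measurable_mk
  have hvw : v =ᵐ[volume.restrict (Ico (0:ℝ) 1)] w := hvae.ae_eq_mk
  set F : ℝ → ENNReal := fun x => ENNReal.ofReal (2 * (1-x) ^ (-(1/2):ℝ)) with hF
  set gsq : ℝ → ENNReal := fun t => ENNReal.ofReal ((1-t) ^ ((3:ℝ)/2) * w t ^ 2) with hgsq
  have hFm : Measurable F :=
    ENNReal.measurable_ofReal.comp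
      (measurable_const.mul ((measurable_const.sub measurable_id).pow measurable_const))
  have hgsqm : Measurable gsq :=
    ENNReal.measurable_ofReal.comp
      (((measurable_const.sub measurable_id).pow measurable_const).mul (hwm.pow measurable_const))
  set K : ℝ × ℝ → ENNReal :=
    fun p => ({q : ℝ × ℝ | 0 < q.2 ∧ q.2 ≤ q.1}).indicator (fun q => F q.1 * gsq q.2) p with hK
  have hSm : MeasurableSet {q : ℝ × ℝ | 0 < q.2 ∧ q.2 ≤ q.1} :=
    (measurableSet_lt measurable_const measurable_snd).inter
      (measurableSet_le measurable_snd measurable_fst)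
  have hKm : Measurable K :=
    ((hFm.comp measurable_fst).mul (hgsqm.comp measurable_snd)).indicator hSm
  -- Step 1: pointwise bound
  have step1 : (∫⁻ x in Ico (0:ℝ) 1, ENNReal.ofReal ((u x) ^ 2))
      ≤ ∫⁻ x in Ico (0:ℝ) 1, ∫⁻ t in Ico (0:ℝ) 1, K (x, t) := by
    apply lintegral_mono_ae
    rw [ae_restrict_iff' measurableSet_Ico]
    filter_upwards with x hx
    have hvwx : v =ᵐ[volume.restrict (Ioc (0:ℝ) x)] w :=
      ae_restrict_of_ae_restrict_of_subset
        (show Ioc (0:ℝ) x ⊆ Ico 0 1 from fun t ht => ⟨le_of_lt ht.1, lt_of_le_of_lt ht.2 hx.2⟩) hvw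
    refine (pointwise_bound u v w hwm x hx.1 hx.2 (hftc x hx).1 (hftc x hx).2 hvwx).trans
      (le_of_eq ?_)
    -- rewrite RHS as double integral
    have hind : ∀ t : ℝ, K (x, t) = (Ioc (0:ℝ) x).indicator (fun t => F x * gsq t) t := by
      intro t
      simp only [hK, Set.indicator_apply, Set.mem_setOf_eq, Set.mem_Ioc]
    calc F x * ∫⁻ t in Ioc (0:ℝ) x, gsq t
        = ∫⁻ t in Ioc (0:ℝ) x, F x * gsq t := (lintegral_const_mul' _ _ ENNReal.ofReal_ne_top).symm
      _ = ∫⁻ t in Ioc (0:ℝ) x ∩ Ico (0:ℝ) 1, F x * gsq t := by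
          rw [Set.inter_eq_left.2
            (show Ioc (0:ℝ) x ⊆ Ico 0 1 from fun t ht => ⟨ht.1.le, lt_of_le_of_lt ht.2 hx.2⟩)]
      _ = ∫⁻ t in Ico (0:ℝ) 1, (Ioc (0:ℝ) x).indicator (fun t => F x * gsq t) t := by
          rw [lintegral_indicator measurableSet_Ioc, Measure.restrict_restrict measurableSet_Ioc]
      _ = ∫⁻ t in Ico (0:ℝ) 1, K (x, t) := by
          exact lintegral_congr fun t => (hind t).symm
  -- Step 2: Tonelli
  have step2 : (∫⁻ x in Ico (0:ℝ) 1, ∫⁻ t in Ico (0:ℝ) 1, K (x, t))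
      = ∫⁻ t in Ico (0:ℝ) 1, ∫⁻ x in Ico (0:ℝ) 1, K (x, t) := by
    apply lintegral_lintegral_swap
    exact hKm.aemeasurable
  -- Step 3: compute the inner integral
  have step3 : (∫⁻ t in Ico (0:ℝ) 1, ∫⁻ x in Ico (0:ℝ) 1, K (x, t))
      = ∫⁻ t in Ico (0:ℝ) 1, 4 * ENNReal.ofReal ((1 - t) ^ 2 * (w t) ^ 2) := by
    apply lintegral_congr_ae
    have hne : ∀ᵐ (t : ℝ), t ≠ 0 := by
      rw [ae_iff]
      simpa only [ne_eq, not_not, Set.setOf_eq_eq_singleton] using measure_singleton (0:ℝ)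
    filter_upwards [ae_restrict_mem measurableSet_Ico, ae_restrict_of_ae hne] with t ht htne
    have ht0 : (0:ℝ) < t := lt_of_le_of_ne ht.1 (Ne.symm htne)
    have ht1 : t < 1 := ht.2
    have h1t : (0:ℝ) < 1 - t := by linarith
    have hind : ∀ x : ℝ, K (x, t) = (Ici t).indicator (fun x => gsq t * F x) x := by
      intro x
      by_cases h : t ≤ x <;>
        simp [hK, Set.indicator_apply, h, ht0, mul_comm]
    calc (∫⁻ x in Ico (0:ℝ) 1, K (x, t))
        = ∫⁻ x in Ico (0:ℝ) 1, (Ici t).indicator (fun x => gsq t * F x) x :=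
          lintegral_congr fun x => hind x
      _ = ∫⁻ x in Ici t ∩ Ico (0:ℝ) 1, gsq t * F x := by
          rw [lintegral_indicator measurableSet_Ici, Measure.restrict_restrict measurableSet_Ici]
      _ = ∫⁻ x in Ico t 1, gsq t * F x := by
          rw [show Ici t ∩ Ico (0:ℝ) 1 = Ico t 1 from Set.ext fun x => by
            simp only [mem_inter_iff, mem_Ici, mem_Ico]
            constructor
            · rintro ⟨h1, h2, h3⟩; exact ⟨h1, h3⟩
            · rintro ⟨h1, h2⟩; exact ⟨h1, le_trans ht0.le h1, h2⟩]
      _ = gsq t * ∫⁻ x in Ico t 1, F x := lintegral_const_mul' _ _ ENNReal.ofReal_ne_top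
      _ = gsq t * ENNReal.ofReal (4 * (1-t) ^ ((1/2):ℝ)) := by rw [hF, lint_F t ht0.le ht1]
      _ = 4 * ENNReal.ofReal ((1 - t) ^ 2 * (w t) ^ 2) := by
          rw [hgsq]
          rw [← ENNReal.ofReal_mul (by positivity)]
          rw [show ((1:ℝ)-t) ^ ((3:ℝ)/2) * w t ^ 2 * (4 * (1-t) ^ ((1/2):ℝ))
              = 4 * ((1-t) ^ ((3:ℝ)/2) * (1-t) ^ ((1/2):ℝ) * w t ^ 2) by ring]
          rw [← Real.rpow_add h1t]
          norm_num
  have step4 : (∫⁻ t in Ico (0:ℝ) 1, 4 * ENNReal.ofReal ((1 - t) ^ 2 * (w t) ^ 2))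
      = 4 * ∫⁻ t in Ico (0:ℝ) 1, ENNReal.ofReal ((1 - t) ^ 2 * (v t) ^ 2) := by
    rw [lintegral_const_mul' _ _ (by norm_num : (4:ENNReal) ≠ ⊤)]
    congr 1
    apply lintegral_congr_ae
    filter_upwards [hvw] with t htw
    rw [htw]
  exact step1.trans (le_of_eq (step2.trans (step3.trans step4)))
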